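/- Let ψ_n(r) = (1/√(π n⁵)) e^{−r/n} L¹_{n−1}(2r/n), where L¹_{n−1} is the generalized Laguerre polynomial with parameter 1 and degree n−1. Then ∫₀^∞ 4π r² ψ_n(r)² dr = 1 for every positive integer n. -/

import Mathlib

open MeasureTheory Real

/-- Generalized Laguerre polynomial with parameter 1:
`L¹_m(z) = (1/m!) z⁻¹ e^z (d/dz)^m (e^{-z} z^{m+1})`. -/
noncomputable def lag (m : ℕ) (z : ℝ) : ℝ :=
  (1 / (m.factorial : ℝ)) * z⁻¹ * Real.exp z *
    iteratedDeriv m (fun t => Real.exp (-t) * t ^ (m + 1)) z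

/-- The n-th radial s-orbital hydrogen wavefunction
`ψ_n(r) = (π n⁵)^{-1/2} e^{-r/n} L¹_{n-1}(2r/n)`. -/
noncomputable def psi (n : ℕ) (r : ℝ) : ℝ :=
  (Real.sqrt (Real.pi * (n : ℝ) ^ 5))⁻¹ * Real.exp (-r / n) * lag (n - 1) (2 * r / n)

open Polynomial Finset


lemma deriv_exp_mul_poly (p : Polynomial ℝ) :
    deriv (fun t => Real.exp (-t) * p.eval t)
      = fun t => Real.exp (-t) * (Polynomial.derivative p - p).eval t := by
  funext t
  have h1 : HasDerivAt (fun t : ℝ => Real.exp (-t)) (-Real.exp (-t)) t := by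
    convert (hasDerivAt_neg t).exp using 1; ring
  have h2 := p.hasDerivAt t
  have := h1.mul h2
  rw [show (fun t => Real.exp (-t) * p.eval t) = ((fun t => Real.exp (-t)) * fun x => p.eval x) from rfl, this.deriv]
  simp [Polynomial.eval_sub]
  ring

lemma iteratedDeriv_exp_mul (j : ℕ) (p : Polynomial ℝ) :
    iteratedDeriv j (fun t => Real.exp (-t) * p.eval t)
      = fun z => Real.exp (-z) *
          (((Polynomial.derivative - 1 : Module.End ℝ (Polynomial ℝ)) ^ j) p).eval z := by
  induction j generalizing p with
  | zero => simp
  | succ j ih =>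
    rw [iteratedDeriv_succ', deriv_exp_mul_poly, ]
    have : (fun t => Real.exp (-t) * (Polynomial.derivative p - p).eval t)
        = fun t => Real.exp (-t) *
            (((Polynomial.derivative - 1 : Module.End ℝ (Polynomial ℝ))) p).eval t := by
      simp
    rw [this, ih]
    funext z
    rw [← Module.End.mul_apply, ← pow_succ]

lemma Dpow_apply (j : ℕ) (p : Polynomial ℝ) :
    ((Polynomial.derivative - 1 : Module.End ℝ (Polynomial ℝ)) ^ j) p
      = ∑ k ∈ range (j+1), ((-1:ℝ)^(j-k) * (j.choose k)) •
          (⇑(Polynomial.derivative : Polynomial ℝ →ₗ[ℝ] Polynomial ℝ))^[k] p := by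
  have hc : Commute (Polynomial.derivative : Module.End ℝ (Polynomial ℝ)) (-1) :=
    Commute.neg_one_right (Polynomial.derivative : Module.End ℝ (Polynomial ℝ))
  rw [sub_eq_add_neg, hc.add_pow, LinearMap.sum_apply]
  refine Finset.sum_congr rfl fun k _ => ?_
  rw [mul_assoc, Module.End.mul_apply]
  have h2 : (((-1 : Module.End ℝ (Polynomial ℝ)) ^ (j - k) *
      (j.choose k : Module.End ℝ (Polynomial ℝ)))) p
        = (((-1:ℝ)^(j-k) * (j.choose k : ℝ))) • p := by
    have h3 : ((-1 : Module.End ℝ (Polynomial ℝ)) ^ (j-k) *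
        (j.choose k : Module.End ℝ (Polynomial ℝ)))
          = algebraMap ℝ (Module.End ℝ (Polynomial ℝ)) ((-1:ℝ)^(j-k) * (j.choose k : ℝ)) := by
      rw [map_mul, map_pow, map_neg, map_one, map_natCast]
    rw [h3, Module.algebraMap_end_apply]
  rw [h2, LinearMap.map_smul, Module.End.pow_apply]

lemma coeff_nat (m k : ℕ) (h : k ≤ m) :
    (m.choose (m-k)) * ((m+1).descFactorial (m-k)) * k.factorial
      = (m+1).choose (k+1) * m.factorial := by
  rw [Nat.descFactorial_eq_factorial_mul_choose]
  have h1 : (m+1).choose (m-k) = (m+1).choose (k+1) := by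
    rw [← Nat.choose_symm (by omega : k+1 ≤ m+1)]
    congr 1
    omega
  rw [h1, Nat.choose_symm h]
  have h2 := Nat.choose_mul_factorial_mul_factorial h
  calc m.choose k * ((m-k).factorial * (m+1).choose (k+1)) * k.factorial
      = (m.choose k * k.factorial * (m-k).factorial) * (m+1).choose (k+1) := by ring
    _ = (m+1).choose (k+1) * m.factorial := by rw [h2]; ring

lemma lag_eq (m : ℕ) {z : ℝ} (hz : z ≠ 0) :
    lag m z = ∑ k ∈ range (m+1),
      ((-1:ℝ)^k * (((m+1).choose (k+1) : ℕ) : ℝ) / (k.factorial : ℝ)) * z ^ k := by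
  unfold lag
  have h0 : (fun t : ℝ => Real.exp (-t) * t ^ (m+1))
      = fun t => Real.exp (-t) * (X^(m+1) : Polynomial ℝ).eval t := by simp
  rw [h0, iteratedDeriv_exp_mul, Dpow_apply]
  beta_reduce
  rw [Polynomial.eval_finset_sum]
  simp only [Polynomial.iterate_derivative_X_pow_eq_smul, Polynomial.eval_smul, smul_eq_mul,
    Polynomial.eval_pow, Polynomial.eval_X, Polynomial.eval_natCast]
  rw [← Finset.sum_range_reflect, Finset.mul_sum, Finset.mul_sum]
  refine Finset.sum_congr rfl fun k hk => ?_
  have hk' : k ≤ m := by simpa using Nat.lt_succ_iff.mp (Finset.mem_range.mp hk)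
  have e1 : m + 1 - 1 - k = m - k := by omega
  have e2 : m - (m - k) = k := by omega
  have e3 : m + 1 - (m - k) = k + 1 := by omega
  rw [e1, e2, e3]
  have hcoeff : ((m.choose (m-k) : ℝ) * ((m+1).descFactorial (m-k) : ℝ) * (k.factorial : ℝ))
      = ((m+1).choose (k+1) : ℝ) * (m.factorial : ℝ) := by
    exact_mod_cast congrArg (fun x : ℕ => (x : ℝ)) (coeff_nat m k hk')
  have hexp : Real.exp z * Real.exp (-z) = 1 := by
    rw [← Real.exp_add]; simp
  have hfac : (m.factorial : ℝ) ≠ 0 := Nat.cast_ne_zero.mpr m.factorial_ne_zero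
  have hfac' : (k.factorial : ℝ) ≠ 0 := Nat.cast_ne_zero.mpr k.factorial_ne_zero
  rw [pow_succ]
  have hstep : 1 / (m.factorial:ℝ) * z⁻¹ * Real.exp z *
      (Real.exp (-z) * ((-1:ℝ)^k * (m.choose (m-k) : ℝ) *
        (((m+1).descFactorial (m-k) : ℝ) * (z^k * z))))
      = (Real.exp z * Real.exp (-z)) * (z⁻¹ * z) *
        ((-1:ℝ)^k * ((m.choose (m-k) : ℝ) * ((m+1).descFactorial (m-k) : ℝ)
          / (m.factorial : ℝ)) * z^k) := by
    field_simp
  rw [hstep, hexp, inv_mul_cancel₀ hz, one_mul, one_mul]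
  have : ((m.choose (m-k) : ℝ) * ((m+1).descFactorial (m-k) : ℝ) / (m.factorial : ℝ))
      = ((m+1).choose (k+1) : ℝ) / (k.factorial : ℝ) := by
    rw [Nat.choose_symm hk'] at hcoeff
    field_simp
    rw [Nat.choose_symm hk']
    linear_combination hcoeff
  rw [this]
  ring

lemma asc_key (a q : ℕ) : (a+1).ascFactorial (q+1)
    = (q+1) * (a+1).ascFactorial q + a.ascFactorial (q+1) := by
  rw [Nat.ascFactorial_succ, Nat.ascFactorial_succ]
  calc (a+1+q) * (a+1).ascFactorial q
      = (q+1) * (a+1).ascFactorial q + a * (a+1).ascFactorial q := by ring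
    _ = (q+1) * (a+1).ascFactorial q + (a+q) * a.ascFactorial q := by
        rw [Nat.succ_ascFactorial a q]

lemma fd_asc (q j : ℕ) (hj : j ≤ q) :
    (fwdDiff (1:ℕ))^[j] (fun i : ℕ => ((i.ascFactorial q : ℕ) : ℝ))
      = fun i : ℕ => (q.descFactorial j : ℝ) * (((i + j).ascFactorial (q - j) : ℕ) : ℝ) := by
  induction j with
  | zero => simp
  | succ j ih =>
    have hj' : j ≤ q := by omega
    rw [Function.iterate_succ_apply', ih hj']
    funext i
    simp only [fwdDiff]
    have e : i + 1 + j = i + j + 1 := by omega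
    rw [e]
    have hq : q - j = (q - (j+1)) + 1 := by omega
    have hkey : (((i+j+1).ascFactorial (q-j) : ℕ) : ℝ)
        = (((q - (j+1)) + 1 : ℕ) : ℝ) * (((i+j+1).ascFactorial (q-(j+1)) : ℕ) : ℝ)
          + (((i+j).ascFactorial (q-j) : ℕ) : ℝ) := by
      rw [hq]
      exact_mod_cast congrArg (fun x : ℕ => (x : ℝ)) (asc_key (i+j) (q-(j+1)))
    rw [Nat.descFactorial_succ]
    have e2 : (q - (j+1)) + 1 = q - j := by omega
    rw [e2] at hkey
    push_cast
    have e3 : ((q:ℝ) - j) = ((q - j : ℕ) : ℝ) := by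
      rw [Nat.cast_sub hj']
    rw [← e3] at hkey ⊢
    have e4 : i + (j + 1) = i + j + 1 := by omega
    rw [e4]
    linear_combination ((q.descFactorial j : ℝ)) * hkey

lemma fd_zero_of_lt (N q : ℕ) (h : q < N) :
    (fwdDiff (1:ℕ))^[N] (fun i : ℕ => ((i.ascFactorial q : ℕ) : ℝ)) = fun _ => 0 := by
  have hN : N = (N - (q+1)) + (q+1) := by omega
  rw [hN, Function.iterate_add_apply]
  have h1 : (fwdDiff (1:ℕ))^[q+1] (fun i : ℕ => ((i.ascFactorial q : ℕ) : ℝ))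
      = fun _ => 0 := by
    rw [Function.iterate_succ_apply', fd_asc q q le_rfl]
    funext i
    simp [fwdDiff]
  rw [h1]
  have hz : fwdDiff (1:ℕ) (fun _ => (0:ℝ)) = (fun _ => (0:ℝ)) := by
    funext i; simp [fwdDiff]
  exact Function.iterate_fixed hz _

noncomputable def cc (m k : ℕ) : ℝ :=
  (-1:ℝ)^k * (((m+1).choose (k+1) : ℕ) : ℝ) / (k.factorial : ℝ)

lemma lagInnerSum (m k : ℕ) :
    ∑ j ∈ range (m+1), cc m j * (((k+j+2).factorial : ℕ) : ℝ)
      = (-1:ℝ)^m *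
        ((fwdDiff (1:ℕ))^[m+1] (fun i : ℕ => ((i.ascFactorial (k+2) : ℕ) : ℝ)) 0) := by
  rw [fwdDiff_iter_eq_sum_shift, Finset.mul_sum]
  conv_rhs => rw [Finset.sum_range_succ']
  have h0 : ((-1:ℝ)^m) * (((-1 : ℤ) ^ (m + 1 - 0) * ((m+1).choose 0 : ℤ)) •
      ((((0 + 0 • 1 : ℕ)).ascFactorial (k+2) : ℝ))) = 0 := by
    simp [Nat.zero_ascFactorial]
  rw [h0, add_zero]
  refine Finset.sum_congr rfl fun j hj => ?_
  have hj' : j ≤ m := Nat.lt_succ_iff.mp (Finset.mem_range.mp hj)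
  have e1 : m + 1 - (j + 1) = m - j := by omega
  have e2 : (0 + (j+1) • 1 : ℕ) = j + 1 := by simp
  rw [e1, e2]
  have hsign : (-1:ℝ)^m * (-1:ℝ)^(m - j) = (-1:ℝ)^j := by
    rw [← pow_add]
    have : m + (m - j) = 2*(m-j) + j := by omega
    rw [this, pow_add, pow_mul]
    norm_num
  have hfact : ((k+j+2).factorial : ℝ)
      = (j.factorial : ℝ) * (((j+1).ascFactorial (k+2) : ℕ) : ℝ) := by
    have := Nat.factorial_mul_ascFactorial j (k+2)
    have e3 : j + (k + 2) = k + j + 2 := by omega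
    rw [e3] at this
    exact_mod_cast this.symm
  rw [cc, hfact]
  have hfac' : (j.factorial : ℝ) ≠ 0 := Nat.cast_ne_zero.mpr j.factorial_ne_zero
  have : (((-1 : ℤ) ^ (m - j) * ((m+1).choose (j+1) : ℤ)) •
      (((j+1).ascFactorial (k+2) : ℕ) : ℝ))
      = ((-1:ℝ) ^ (m - j) * ((m+1).choose (j+1) : ℝ)) *
        (((j+1).ascFactorial (k+2) : ℕ) : ℝ) := by
    simp only [zsmul_eq_mul]
    push_cast
    ring
  rw [this]
  field_simp
  linear_combination -((m+1).choose (j+1) : ℝ) * hsign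

lemma key_sum (m : ℕ) :
    ∑ k ∈ range (m+1), ∑ j ∈ range (m+1),
        cc m k * cc m j * (((k+j+2).factorial : ℕ) : ℝ)
      = 2 * ((m:ℝ)+1)^2 := by
  have hterm : ∀ k, ∑ j ∈ range (m+1), cc m k * cc m j * (((k+j+2).factorial : ℕ) : ℝ)
      = cc m k * ((-1:ℝ)^m *
          ((fwdDiff (1:ℕ))^[m+1] (fun i : ℕ => ((i.ascFactorial (k+2) : ℕ) : ℝ)) 0)) := by
    intro k
    rw [← lagInnerSum, Finset.mul_sum]
    exact Finset.sum_congr rfl fun j _ => by ring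
  rw [Finset.sum_congr rfl fun k _ => hterm k]
  match m with
  | 0 =>
    simp only [Finset.sum_range_one, cc, fwdDiff, Function.iterate_one]
    norm_num [Nat.ascFactorial]
    norm_num [fwdDiff]
  | (m'+1) =>
    rw [Finset.sum_range_succ, Finset.sum_range_succ]
    rw [Finset.sum_eq_zero (fun k hk => by
      rw [fd_zero_of_lt (m'+1+1) (k+2) (by
        have := Finset.mem_range.mp hk; omega)]
      simp)]
    rw [zero_add]
    have hA : (fwdDiff (1:ℕ))^[m'+1+1] (fun i : ℕ => ((i.ascFactorial (m'+2) : ℕ) : ℝ)) 0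
        = (((m'+2).factorial : ℕ) : ℝ) := by
      have : m'+1+1 = m'+2 := rfl
      rw [this, fd_asc (m'+2) (m'+2) le_rfl]
      beta_reduce
      rw [Nat.sub_self, Nat.ascFactorial_zero, Nat.descFactorial_self, Nat.cast_one, mul_one]
    have hB : (fwdDiff (1:ℕ))^[m'+1+1] (fun i : ℕ => ((i.ascFactorial (m'+1+2) : ℕ) : ℝ)) 0
        = (((m'+2).factorial : ℕ) : ℝ) * (m'+3) * (m'+2) := by
      rw [fd_asc (m'+3) (m'+2) (by omega)]
      beta_reduce
      have e1 : m'+3 - (m'+2) = 1 := by omega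
      have e2 : (0:ℕ) + (m'+2) = m'+2 := by omega
      rw [e1, e2]
      have e3 : (m'+3).descFactorial (m'+2) = (m'+2).factorial * (m'+3) := by
        rw [Nat.descFactorial_eq_factorial_mul_choose]
        congr 1
        exact Nat.choose_succ_self_right (m'+2)
      have e4 : (m'+2).ascFactorial 1 = m'+2 := by
        simp [Nat.ascFactorial]
      rw [e3, e4]
      push_cast
      ring
    rw [hA, hB]
    simp only [cc, Nat.choose_succ_self_right, Nat.choose_self]
    have hsq : (-1:ℝ)^m' * (-1:ℝ)^m' = 1 := by
      rw [← pow_add, ← two_mul, pow_mul]; norm_num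
    have f2 : (((m'+2).factorial : ℕ) : ℝ) = ((m':ℝ)+2) * ((m':ℝ)+1) * (m'.factorial : ℝ) := by
      push_cast [Nat.factorial_succ]
      ring
    have f1 : (((m'+1).factorial : ℕ) : ℝ) = ((m':ℝ)+1) * (m'.factorial : ℝ) := by
      push_cast [Nat.factorial_succ]
      ring
    have hm0 : (m'.factorial : ℝ) ≠ 0 := Nat.cast_ne_zero.mpr m'.factorial_ne_zero
    rw [pow_succ, f2, f1]
    push_cast
    field_simp
    have hsq2 : (-1:ℝ)^(m'*2) = 1 := by
      rw [mul_comm m' 2, pow_mul]; norm_num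
    ring_nf
    rw [hsq2]
    ring

lemma integrableOn_pow_exp (p : ℕ) {b : ℝ} (hb : 0 < b) :
    IntegrableOn (fun r : ℝ => r ^ p * Real.exp (-(b * r))) (Set.Ioi 0) := by
  have h := integrableOn_rpow_mul_exp_neg_mul_rpow
    (show (-1:ℝ) < (p:ℝ) from lt_of_lt_of_le neg_one_lt_zero (Nat.cast_nonneg p)) (one_pos (α := ℝ)) hb
  have he : (fun x : ℝ => x ^ ((p:ℝ)) * Real.exp (-b * x ^ (1:ℝ)))
      = fun r : ℝ => r ^ p * Real.exp (-(b * r)) := by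
    funext x
    rw [Real.rpow_natCast, Real.rpow_one, neg_mul]
  rwa [he] at h

lemma integral_pow_exp (p : ℕ) {b : ℝ} (hb : 0 < b) :
    ∫ r in Set.Ioi (0:ℝ), r ^ p * Real.exp (-(b * r))
      = (1/b) ^ (p+1) * ((p.factorial : ℕ) : ℝ) := by
  have h := Real.integral_rpow_mul_exp_neg_mul_Ioi
    (show (0:ℝ) < (p:ℝ) + 1 by positivity) hb
  have he : (fun t : ℝ => t ^ (((p:ℝ) + 1) - 1) * Real.exp (-(b * t)))
      = fun r : ℝ => r ^ p * Real.exp (-(b * r)) := by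
    funext t
    rw [add_sub_cancel_right, Real.rpow_natCast]
  rw [he] at h
  rw [h, Real.Gamma_nat_eq_factorial]
  have h1 : ((p:ℝ) + 1) = ((p + 1 : ℕ) : ℝ) := by push_cast; ring
  rw [h1, Real.rpow_natCast]


theorem stmt5 (n : ℕ) (hn : 0 < n) :
    ∫ r in Set.Ioi (0:ℝ), 4 * Real.pi * r ^ 2 * (psi n r) ^ 2 = 1 := by
  obtain ⟨m, rfl⟩ : ∃ m, n = m + 1 := ⟨n - 1, by omega⟩
  have hM : (0:ℝ) < ((m+1:ℕ):ℝ) := by positivity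
  set b : ℝ := 2 / ((m+1:ℕ):ℝ) with hbdef
  have hbpos : 0 < b := by positivity
  have hbne : b ≠ 0 := ne_of_gt hbpos
  have hEq : Set.EqOn (fun r : ℝ => 4 * Real.pi * r ^ 2 * (psi (m+1) r) ^ 2)
      (fun r : ℝ => ∑ k ∈ range (m+1), ∑ j ∈ range (m+1),
        (4 * Real.pi * (Real.pi * ((m+1:ℕ):ℝ)^5)⁻¹ * cc m k * cc m j * b^(k+j)) *
          (r^(k+j+2) * Real.exp (-(b*r)))) (Set.Ioi 0) := by
    intro r hr
    have hr0 : (0:ℝ) < r := hr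
    have hx : 2 * r / ((m+1:ℕ):ℝ) = b * r := by rw [hbdef]; ring
    have hxne : 2 * r / ((m+1:ℕ):ℝ) ≠ 0 := by rw [hx]; positivity
    have hA : ((Real.sqrt (Real.pi * ((m+1:ℕ):ℝ)^5))⁻¹)^2
        = (Real.pi * ((m+1:ℕ):ℝ)^5)⁻¹ := by
      rw [inv_pow, Real.sq_sqrt (by positivity)]
    have hE : Real.exp (-r / ((m+1:ℕ):ℝ)) ^ 2 = Real.exp (-(b*r)) := by
      rw [sq, ← Real.exp_add]
      congr 1
      rw [hbdef]
      field_simp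
      ring
    simp only [psi, Nat.add_sub_cancel]
    rw [lag_eq m hxne, hx, mul_pow, mul_pow, hA, hE]
    have hS : (∑ k ∈ range (m+1), ((-1:ℝ)^k * (((m+1).choose (k+1) : ℕ) : ℝ)
          / (k.factorial : ℝ)) * (b*r) ^ k) ^ 2
        = ∑ k ∈ range (m+1), ∑ j ∈ range (m+1),
            (cc m k * (b*r)^k) * (cc m j * (b*r)^j) := by
      rw [sq, Finset.sum_mul_sum]
      rfl
    rw [hS]
    simp only [Finset.mul_sum]
    refine Finset.sum_congr rfl fun k _ => Finset.sum_congr rfl fun j _ => ?_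
    rw [mul_pow (b) (r)]
    rw [mul_pow (b) (r)]
    ring
  rw [setIntegral_congr_fun measurableSet_Ioi hEq]
  rw [integral_finset_sum _ (fun k _ => integrable_finset_sum _
    (fun j _ => ((integrableOn_pow_exp (k+j+2) hbpos).const_mul _)))]
  have hval : ∀ k ∈ range (m+1),
      ∫ r in Set.Ioi (0:ℝ), ∑ j ∈ range (m+1),
          (4 * Real.pi * (Real.pi * ((m+1:ℕ):ℝ)^5)⁻¹ * cc m k * cc m j * b^(k+j)) *
            (r^(k+j+2) * Real.exp (-(b*r)))
        = ∑ j ∈ range (m+1), (4 * Real.pi * (Real.pi * ((m+1:ℕ):ℝ)^5)⁻¹ * (1/b)^3) *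
            (cc m k * cc m j * (((k+j+2).factorial : ℕ) : ℝ)) := by
    intro k _
    rw [integral_finset_sum _ (fun j _ => ((integrableOn_pow_exp (k+j+2) hbpos).const_mul _))]
    refine Finset.sum_congr rfl fun j _ => ?_
    rw [MeasureTheory.integral_const_mul _ _, integral_pow_exp (k+j+2) hbpos]
    have hbs : b^(k+j) * (1/b)^(k+j+3) = (1/b)^3 := by
      rw [pow_add (1/b) (k+j) 3, ← mul_assoc, ← mul_pow, mul_one_div_cancel hbne, one_pow, one_mul]
    have e : k+j+2+1 = k+j+3 := by omega
    rw [e]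
    linear_combination (4 * Real.pi * (Real.pi * ((m+1:ℕ):ℝ)^5)⁻¹ * cc m k * cc m j *
      (((k+j+2).factorial : ℕ) : ℝ)) * hbs
  rw [Finset.sum_congr rfl hval]
  simp only [← Finset.mul_sum]
  rw [key_sum m]
  rw [hbdef]
  have hpi : Real.pi ≠ 0 := Real.pi_ne_zero
  have hMne : ((m+1:ℕ):ℝ) ≠ 0 := ne_of_gt hM
  have hcast : ((m+1:ℕ):ℝ) = (m:ℝ) + 1 := by push_cast; ring
  rw [hcast] at hMne ⊢
  field_simp
  ring
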